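/- Let φ(t) = min(t^α, 1) with α ∈ (0,1) and ς ∈ (0,∞). Then for every t ≥ 0, h_ς(t) = min( t², (1+α)·(ς²/(4α))^{α/(1+α)}·t^{2/(1+α)} ), where h_ς(t) := inf_{τ>0}{ φ(1/τ)·t² + (ς²/4)·τ }. In particular h_ς is sub-quadratic (grows like t^{2/(1+α)}) for large t. -/

import Mathlib

open Set Filter Topology

/-- `hS φ ς t = inf_{τ>0} { φ(1/τ)·t² + (ς²/4)·τ }`. -/
noncomputable def hS (φ : ℝ → ℝ) (ς t : ℝ) : ℝ :=
  sInf {y : ℝ | ∃ τ : ℝ, 0 < τ ∧ y = φ (1/τ) * t^2 + ς^2/4 * τ}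

/-- The convex lower envelope of `f` on `[0,∞)`. -/
noncomputable def convEnv (f : ℝ → ℝ) (t : ℝ) : ℝ :=
  sSup {y : ℝ | ∃ g : ℝ → ℝ, ConvexOn ℝ (Ici 0) g ∧ (∀ s ∈ Ici (0:ℝ), g s ≤ f s) ∧ y = g t}


/-- For `φ(t) = min(t^α, 1)` with `α ∈ (0,1)`, an explicit formula for `h_ς`:
`h_ς(t) = min( t², (1+α)(ς²/(4α))^{α/(1+α)} t^{2/(1+α)} )`. -/

lemma key_lb {α c t τ : ℝ} (hα0 : 0 < α) (hα1 : α < 1) (hc : 0 < c)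
    (ht : 0 ≤ t) (hτ : 0 < τ) :
    (1+α) * (c/α) ^ (α/(1+α)) * t ^ (2/(1+α))
      ≤ τ ^ (-α) * t^2 + c*τ := by
  have hA : (0:ℝ) < 1+α := by linarith
  have hτα : (0:ℝ) < τ ^ (-α) := Real.rpow_pos_of_pos hτ _
  rcases eq_or_lt_of_le ht with h0 | ht
  · rw [← h0, Real.zero_rpow (ne_of_gt (div_pos two_pos hA))]
    nlinarith
  set w₁ := 1/(1+α) with hw₁
  set w₂ := α/(1+α) with hw₂
  have hw : w₁ + w₂ = 1 := by rw [hw₁, hw₂]; field_simp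
  have key := Real.geom_mean_le_arith_mean2_weighted (w₁ := w₁) (w₂ := w₂)
      (p₁ := (1+α) * (τ ^ (-α) * t^2)) (p₂ := ((1+α)/α) * (c*τ))
      (by positivity) (by positivity) (by positivity) (by positivity) hw
  have hrhs : w₁ * ((1+α) * (τ ^ (-α) * t^2)) + w₂ * (((1+α)/α) * (c*τ))
      = τ ^ (-α) * t^2 + c*τ := by
    field_simp [hw₁, hw₂]; rw [hw₁, hw₂]; field_simp
  have e2 : (t:ℝ)^2 = t ^ (2:ℝ) := by
    rw [← Real.rpow_natCast t 2]; norm_num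
  have h1 : (τ ^ (-α)) ^ w₁ * τ ^ w₂ = 1 := by
    rw [← Real.rpow_mul hτ.le, ← Real.rpow_add hτ,
      show -α * w₁ + w₂ = 0 by rw [hw₁, hw₂]; ring, Real.rpow_zero]
  have h2 : (1+α) ^ w₁ * (1+α) ^ w₂ = 1+α := by
    rw [← Real.rpow_add hA, hw, Real.rpow_one]
  have h3 : (t ^ (2:ℝ)) ^ w₁ = t ^ ((2:ℝ) * w₁) := (Real.rpow_mul ht.le 2 w₁).symm
  have hlhs : ((1+α) * (τ ^ (-α) * t^2)) ^ w₁ * (((1+α)/α) * (c*τ)) ^ w₂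
      = (1+α) * (c/α) ^ w₂ * t ^ ((2:ℝ)*w₁) := by
    rw [e2, Real.mul_rpow (by positivity) (by positivity),
        Real.mul_rpow (by positivity) (by positivity),
        Real.mul_rpow (by positivity) (by positivity),
        Real.mul_rpow (by positivity) (by positivity),
        Real.div_rpow hA.le hα0.le, Real.div_rpow hc.le hα0.le, h3]
    have : (1+α) ^ w₁ * ((τ ^ (-α)) ^ w₁ * t ^ ((2:ℝ)*w₁)) *
        ((1+α) ^ w₂ / α ^ w₂ * (c ^ w₂ * τ ^ w₂))
        = ((1+α) ^ w₁ * (1+α) ^ w₂) * ((τ ^ (-α)) ^ w₁ * τ ^ w₂) *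
          (c ^ w₂ / α ^ w₂) * t ^ ((2:ℝ)*w₁) := by ring
    rw [this, h1, h2, mul_one]
  have hexp : (2:ℝ)*w₁ = 2/(1+α) := by rw [hw₁]; ring
  rw [hlhs, hrhs, hexp] at key
  exact key


lemma val_at {α c t : ℝ} (hα0 : 0 < α) (hα1 : α < 1) (hc : 0 < c) (ht : 0 < t) :
    ((α*t^2/c) ^ (1/(1+α))) ^ (-α) * t^2 + c * (α*t^2/c) ^ (1/(1+α))
      = (1+α) * (c/α) ^ (α/(1+α)) * t ^ (2/(1+α)) := by
  have hA : (0:ℝ) < 1+α := by linarith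
  set w₁ := 1/(1+α) with hw₁
  set w₂ := α/(1+α) with hw₂
  set r := α*t^2/c with hrdef
  have hr0 : (0:ℝ) < r := by positivity
  have e2 : (t:ℝ)^2 = t ^ (2:ℝ) := by rw [← Real.rpow_natCast t 2]; norm_num
  have hτ : (r ^ w₁) ^ (-α) = r ^ (-w₂) := by
    rw [← Real.rpow_mul hr0.le, show w₁ * (-α) = -w₂ by rw [hw₁, hw₂]; ring]
  have h2 : c * r ^ w₁ = α * t^2 * r ^ (-w₂) := by
    have : r ^ w₁ = r * r ^ (-w₂) := by
      rw [show w₁ = 1 + -w₂ by rw [hw₁, hw₂]; field_simp; ring, Real.rpow_add hr0,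
        Real.rpow_one]
    rw [this, hrdef]
    field_simp
  have h3 : r ^ (-w₂) = (c/α) ^ w₂ * t ^ (-(2*w₂)) := by
    rw [Real.rpow_neg hr0.le, ← Real.inv_rpow hr0.le,
      show r⁻¹ = (c/α) * (t ^ (2:ℝ))⁻¹ by rw [hrdef, e2]; field_simp,
      Real.mul_rpow (by positivity) (by positivity),
      ← Real.rpow_neg_one (t ^ (2:ℝ)), ← Real.rpow_mul ht.le, ← Real.rpow_mul ht.le]
    norm_num
  have h4 : t ^ (-(2*w₂)) * t^2 = t ^ (2*w₁) := by
    rw [e2, ← Real.rpow_add ht, show -(2*w₂) + 2 = 2*w₁ by rw [hw₁, hw₂]; field_simp; ring]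
  calc (r ^ w₁) ^ (-α) * t^2 + c * r ^ w₁
      = r ^ (-w₂) * t^2 + α * t^2 * r ^ (-w₂) := by rw [hτ, h2]
    _ = (1+α) * (r ^ (-w₂) * t^2) := by ring
    _ = (1+α) * ((c/α) ^ w₂ * (t ^ (-(2*w₂)) * t^2)) := by rw [h3]; ring
    _ = (1+α) * (c/α) ^ w₂ * t ^ (2*w₁) := by rw [h4]; ring
    _ = (1+α) * (c/α) ^ (α/(1+α)) * t ^ (2/(1+α)) := by
        rw [hw₂, show 2*w₁ = 2/(1+α) by rw [hw₁]; ring]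

theorem stmt9 (α ς : ℝ) (hα : α ∈ Ioo (0:ℝ) 1) (hς : 0 < ς) (t : ℝ) (ht : 0 ≤ t) :
    hS (fun s => min (Real.rpow s α) 1) ς t
      = min (t^2)
          ((1+α) * Real.rpow (ς^2/(4*α)) (α/(1+α)) * Real.rpow t (2/(1+α))) := by
  obtain ⟨hα0, hα1⟩ := hα
  have hA : (0:ℝ) < 1+α := by linarith
  simp only [hS]
  have hrpow : ∀ x y : ℝ, Real.rpow x y = x ^ y := fun _ _ => rfl
  simp only [hrpow]
  set c := ς^2/4 with hcdef
  have hc : 0 < c := by positivity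
  rw [show ς^2/(4*α) = c/α by rw [hcdef]; ring]
  set E := (1+α) * (c/α) ^ (α/(1+α)) * t ^ (2/(1+α)) with hEdef
  set S := {y : ℝ | ∃ τ : ℝ, 0 < τ ∧ y = min ((1/τ) ^ α) 1 * t^2 + c * τ} with hSdef
  have hφ1 : ∀ τ : ℝ, 0 < τ → τ ≤ 1 → min ((1/τ) ^ α) 1 = 1 := by
    intro τ hτ hτ1
    exact min_eq_right (Real.one_le_rpow (by rw [le_div_iff₀ hτ]; linarith) hα0.le)
  have hφ2 : ∀ τ : ℝ, 0 < τ → 1 ≤ τ → min ((1/τ) ^ α) 1 = τ ^ (-α) := by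
    intro τ hτ hτ1
    rw [min_eq_left (Real.rpow_le_one (by positivity) (by
      rw [div_le_one hτ]; exact hτ1) hα0.le), one_div, Real.rpow_neg hτ.le,
      ← Real.inv_rpow hτ.le]
  have hlow : ∀ y ∈ S, min (t^2) E ≤ y := by
    rintro y ⟨τ, hτ, rfl⟩
    rcases le_total τ 1 with hτ1 | hτ1
    · rw [hφ1 τ hτ hτ1, one_mul]
      have := min_le_left (t^2) E
      nlinarith
    · rw [hφ2 τ hτ hτ1]
      calc min (t^2) E ≤ E := min_le_right _ _
        _ ≤ τ ^ (-α) * t^2 + c*τ := key_lb hα0 hα1 hc ht hτ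
  have hne : S.Nonempty := ⟨min ((1/1:ℝ) ^ α) 1 * t^2 + c * 1, 1, one_pos, rfl⟩
  have hbdd : BddBelow S := ⟨min (t^2) E, hlow⟩
  have hle_t2 : sInf S ≤ t^2 := by
    apply le_of_forall_pos_le_add
    intro ε hε
    have hτ0 : (0:ℝ) < min 1 (ε/c) := lt_min one_pos (by positivity)
    have hmem : (1:ℝ) * t^2 + c * min 1 (ε/c) ∈ S := by
      exact ⟨min 1 (ε/c), hτ0, by rw [hφ1 _ hτ0 (min_le_left _ _)]⟩
    calc sInf S ≤ 1 * t^2 + c * min 1 (ε/c) := csInf_le hbdd hmem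
      _ ≤ t^2 + ε := by
          have : c * min 1 (ε/c) ≤ ε := by
            calc c * min 1 (ε/c) ≤ c * (ε/c) :=
              mul_le_mul_of_nonneg_left (min_le_right _ _) hc.le
            _ = ε := by field_simp
          linarith
  rcases le_total (t^2) E with hmin | hmin
  · rw [min_eq_left hmin]
    exact le_antisymm hle_t2 (le_csInf hne (by rw [← min_eq_left hmin]; exact hlow))
  · rw [min_eq_right hmin]
    refine le_antisymm ?_ (le_csInf hne (by rw [← min_eq_right hmin]; exact hlow))
    rcases eq_or_lt_of_le ht with h0 | ht
    · have hE0 : E = 0 := by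
        rw [hEdef, ← h0, Real.zero_rpow (ne_of_gt (div_pos two_pos hA)), mul_zero]
      rw [hE0]
      simpa [← h0] using hle_t2
    · -- t > 0 ; show 1 ≤ α*t^2/c
      set w₂ := α/(1+α) with hw₂
      have hw₂0 : 0 < w₂ := by positivity
      have e2 : (t:ℝ)^2 = t ^ (2:ℝ) := by rw [← Real.rpow_natCast t 2]; norm_num
      have hsplit : (t:ℝ)^2 = t ^ (2/(1+α)) * t ^ (2*w₂) := by
        rw [e2, ← Real.rpow_add ht]
        congr 1
        rw [hw₂]; field_simp
      have hT : (0:ℝ) < t ^ (2/(1+α)) := Real.rpow_pos_of_pos ht _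
      have hkey : (1+α) * (c/α) ^ w₂ ≤ t ^ (2*w₂) := by
        have := hmin
        rw [hEdef, hsplit] at this
        nlinarith [Real.rpow_pos_of_pos ht (2*w₂), mul_pos hA (Real.rpow_pos_of_pos (div_pos hc hα0) w₂)]
      have hr : (1:ℝ) ≤ α * t^2 / c := by
        by_contra h
        push_neg at h
        have ht2 : t^2 < c/α := by
          rw [div_lt_iff₀ hc] at h
          rw [lt_div_iff₀ hα0]
          linarith
        have h1 : t ^ (2*w₂) < (c/α) ^ w₂ := by
          rw [Real.rpow_mul ht.le, ← e2]
          exact Real.rpow_lt_rpow (sq_nonneg t) ht2 hw₂0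
        have h2 : (c/α) ^ w₂ ≤ (1+α) * (c/α) ^ w₂ := by
          nlinarith [Real.rpow_pos_of_pos (div_pos hc hα0) w₂]
        linarith
      -- membership of the optimal point
      set τ := (α*t^2/c) ^ (1/(1+α)) with hτdef
      have hτ1 : (1:ℝ) ≤ τ := Real.one_le_rpow hr (by positivity)
      have hτ0 : (0:ℝ) < τ := lt_of_lt_of_le one_pos hτ1
      have hmem : τ ^ (-α) * t^2 + c * τ ∈ S :=
        ⟨τ, hτ0, by rw [hφ2 τ hτ0 hτ1]⟩
      calc sInf S ≤ τ ^ (-α) * t^2 + c * τ := csInf_le hbdd hmem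
        _ = E := val_at hα0 hα1 hc ht
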